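/- Let $G$ be a connected graph on $n$ vertices with adjacency matrix $A$, largest eigenvalue $\lambda$, and positive unit eigenvector $y$ for $\lambda$. Set $q_i = y_i^2$ and $H_\lambda(G) = \sum_{i=1}^n q_i \log(1/q_i)$. Then for any tree $T_m$ on $m$ vertices, $\hom(T_m, G) \geq \exp(H_\lambda(G)) \cdot \lambda^{m-1}$. -/

import Mathlib

open Finset

set_option linter.unusedSectionVars false

/-- The number of graph homomorphisms from `H` to `G`. -/
noncomputable def homCount {α β : Type*} (H : SimpleGraph α) (G : SimpleGraph β) : ℕ :=
  Nat.card (H →g G)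

namespace Stmt8Aux

/-- Jensen's inequality for the logarithm (finite weighted form). -/
lemma jensen_log {ι : Type*} (s : Finset ι) (p x : ι → ℝ)
    (hp : ∀ i ∈ s, 0 ≤ p i) (hx : ∀ i ∈ s, p i ≠ 0 → 0 < x i)
    (hs : ∑ i ∈ s, p i = 1) :
    ∑ i ∈ s, p i * Real.log (x i) ≤ Real.log (∑ i ∈ s, p i * x i) := by
  have hnonneg : ∀ i ∈ s, 0 ≤ p i * x i := by
    intro i hi
    rcases eq_or_ne (p i) 0 with h | h
    · simp [h]
    · exact le_of_lt (mul_pos ((hp i hi).lt_of_ne (Ne.symm h)) (hx i hi h))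
  set t := ∑ i ∈ s, p i * x i with ht
  have htpos : 0 < t := by
    have hex : ∃ i ∈ s, p i ≠ 0 := by
      by_contra h
      push_neg at h
      rw [Finset.sum_eq_zero h] at hs
      norm_num at hs
    obtain ⟨i, hi, hpi⟩ := hex
    exact Finset.sum_pos' hnonneg
      ⟨i, hi, mul_pos ((hp i hi).lt_of_ne (Ne.symm hpi)) (hx i hi hpi)⟩
  have key : ∀ i ∈ s, p i * Real.log (x i) ≤ (p i * x i / t - p i) + p i * Real.log t := by
    intro i hi
    rcases eq_or_ne (p i) 0 with h | h
    · simp [h]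
    · have hxi := hx i hi h
      have hlog : Real.log (x i) - Real.log t ≤ x i / t - 1 := by
        have h2 := Real.log_le_sub_one_of_pos (show 0 < x i / t from div_pos hxi htpos)
        rwa [Real.log_div (ne_of_gt hxi) (ne_of_gt htpos)] at h2
      have hpi : 0 < p i := (hp i hi).lt_of_ne (Ne.symm h)
      have := mul_le_mul_of_nonneg_left hlog hpi.le
      have hexp : p i * (x i / t - 1) = p i * x i / t - p i := by ring
      nlinarith
  calc ∑ i ∈ s, p i * Real.log (x i)
      ≤ ∑ i ∈ s, ((p i * x i / t - p i) + p i * Real.log t) := Finset.sum_le_sum key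
    _ = ((∑ i ∈ s, p i * x i) / t - ∑ i ∈ s, p i) + (∑ i ∈ s, p i) * Real.log t := by
        rw [Finset.sum_add_distrib, Finset.sum_sub_distrib, ← Finset.sum_div, ← Finset.sum_mul]
    _ = Real.log t := by
        rw [hs, ← ht, div_self htpos.ne']
        ring

section Spectral

variable {W : Type*} [Fintype W] [DecidableEq W]
  (G : SimpleGraph W) [DecidableRel G.Adj] (lam : ℝ) (y : W → ℝ)

lemma neighbor_nonempty (hlam : 0 < lam) (hy : ∀ i, 0 < y i)
    (heig : (G.adjMatrix ℝ).mulVec y = lam • y) (j : W) :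
    (G.neighborFinset j).Nonempty := by
  have h1 := congrFun heig j
  rw [SimpleGraph.adjMatrix_mulVec_apply] at h1
  by_contra h
  rw [Finset.not_nonempty_iff_eq_empty] at h
  rw [h, Finset.sum_empty] at h1
  have : (0:ℝ) < lam * y j := mul_pos hlam (hy j)
  simp only [Pi.smul_apply, smul_eq_mul] at h1
  linarith

lemma mulVec_pos (hnb : ∀ j : W, (G.neighborFinset j).Nonempty)
    (w : W → ℝ) (hw : ∀ j, 0 < w j) (j : W) :
    0 < (G.adjMatrix ℝ).mulVec w j := by
  rw [SimpleGraph.adjMatrix_mulVec_apply]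
  exact Finset.sum_pos (fun i _ => hw i) (hnb j)

/-- The key spectral "edge lemma". -/
lemma edge_lemma (hlam : 0 < lam) (hy : ∀ i, 0 < y i)
    (hunit : ∑ i, (y i) ^ 2 = 1)
    (heig : (G.adjMatrix ℝ).mulVec y = lam • y)
    (hnb : ∀ j : W, (G.neighborFinset j).Nonempty)
    (w : W → ℝ) (hw : ∀ j, 0 < w j) :
    Real.log lam + ∑ j, (y j) ^ 2 * Real.log (w j)
      ≤ ∑ i, (y i) ^ 2 * Real.log ((G.adjMatrix ℝ).mulVec w i) := by
  have hq : ∀ i : W, (0:ℝ) < y i ^ 2 := fun i => pow_pos (hy i) 2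
  have hAw : ∀ i, 0 < (G.adjMatrix ℝ).mulVec w i := mulVec_pos G hnb w hw
  have hrow : ∀ i : W, ∑ j, (G.adjMatrix ℝ) i j * y j = lam * y i := by
    intro i
    have h1 := congrFun heig i
    simpa [Matrix.mulVec, dotProduct] using h1
  have hrowW : ∀ i : W, ∑ j, (G.adjMatrix ℝ) i j * w j = (G.adjMatrix ℝ).mulVec w i := by
    intro i
    simp [Matrix.mulVec, dotProduct]
  have key : ∀ i : W,
      ∑ j, (G.adjMatrix ℝ) i j * y j / (lam * y i) * (Real.log (w j) - Real.log (y j))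
        ≤ Real.log ((G.adjMatrix ℝ).mulVec w i) - (Real.log lam + Real.log (y i)) := by
    intro i
    have hly : 0 < lam * y i := mul_pos hlam (hy i)
    have hsum1 : ∑ j, (G.adjMatrix ℝ) i j * y j / (lam * y i) = 1 := by
      rw [← Finset.sum_div, hrow, div_self hly.ne']
    have hjen := jensen_log Finset.univ (fun j => (G.adjMatrix ℝ) i j * y j / (lam * y i))
      (fun j => w j / y j)
      (fun j _ => by
        have : (0:ℝ) ≤ (G.adjMatrix ℝ) i j := by
          simp only [SimpleGraph.adjMatrix_apply]
          split <;> norm_num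
        exact div_nonneg (mul_nonneg this (hy j).le) hly.le)
      (fun j _ _ => div_pos (hw j) (hy j)) hsum1
    have hL : ∀ j : W, (G.adjMatrix ℝ) i j * y j / (lam * y i) * Real.log (w j / y j)
        = (G.adjMatrix ℝ) i j * y j / (lam * y i) * (Real.log (w j) - Real.log (y j)) := by
      intro j
      rw [Real.log_div (hw j).ne' (hy j).ne']
    have hR : ∑ j, (G.adjMatrix ℝ) i j * y j / (lam * y i) * (w j / y j)
        = (G.adjMatrix ℝ).mulVec w i / (lam * y i) := by
      rw [← hrowW i, Finset.sum_div]
      refine Finset.sum_congr rfl fun j _ => ?_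
      have : y j ≠ 0 := (hy j).ne'
      field_simp
    rw [hR] at hjen
    simp only [hL] at hjen
    rwa [Real.log_div (hAw i).ne' hly.ne', Real.log_mul hlam.ne' (hy i).ne'] at hjen
  have tot := Finset.sum_le_sum (fun i (_ : i ∈ Finset.univ) =>
    mul_le_mul_of_nonneg_left (key i) (hq i).le)
  have hRHS : ∑ i, y i ^ 2 *
      (Real.log ((G.adjMatrix ℝ).mulVec w i) - (Real.log lam + Real.log (y i)))
      = ∑ i, y i ^ 2 * Real.log ((G.adjMatrix ℝ).mulVec w i)
        - Real.log lam - ∑ i, y i ^ 2 * Real.log (y i) := by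
    simp only [mul_sub, mul_add]
    rw [Finset.sum_sub_distrib, Finset.sum_add_distrib, ← Finset.sum_mul, hunit]
    ring
  have hLHS : ∑ i, y i ^ 2 *
      ∑ j, (G.adjMatrix ℝ) i j * y j / (lam * y i) * (Real.log (w j) - Real.log (y j))
      = ∑ j, y j ^ 2 * Real.log (w j) - ∑ j, y j ^ 2 * Real.log (y j) := by
    have step1 : ∀ i : W, y i ^ 2 *
        ∑ j, (G.adjMatrix ℝ) i j * y j / (lam * y i) * (Real.log (w j) - Real.log (y j))
        = ∑ j, (G.adjMatrix ℝ) i j * y i * y j / lam * (Real.log (w j) - Real.log (y j)) := by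
      intro i
      rw [Finset.mul_sum]
      refine Finset.sum_congr rfl fun j _ => ?_
      have h1 : y i ≠ 0 := (hy i).ne'
      have h2 : lam ≠ 0 := hlam.ne'
      field_simp
    simp only [step1]
    rw [Finset.sum_comm]
    have step2 : ∀ j : W,
        ∑ i, (G.adjMatrix ℝ) i j * y i * y j / lam * (Real.log (w j) - Real.log (y j))
        = y j ^ 2 * (Real.log (w j) - Real.log (y j)) := by
      intro j
      rw [← Finset.sum_mul]
      congr 1
      have hsymm : ∀ i : W, (G.adjMatrix ℝ) i j = (G.adjMatrix ℝ) j i := by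
        intro i
        simp [SimpleGraph.adjMatrix_apply, G.adj_comm]
      have : ∑ i, (G.adjMatrix ℝ) i j * y i * y j / lam
          = (∑ i, (G.adjMatrix ℝ) j i * y i) * y j / lam := by
        rw [Finset.sum_mul, Finset.sum_div]
        exact Finset.sum_congr rfl fun i _ => by rw [hsymm i]
      rw [this, hrow j]
      field_simp
    simp only [step2]
    rw [← Finset.sum_sub_distrib]
    exact Finset.sum_congr rfl fun j _ => by ring
  rw [hLHS, hRHS] at tot
  linarith

end Spectral

section Comb

variable {V W : Type*} [Fintype V] [Fintype W] [DecidableEq V] [DecidableEq W]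
  (G : SimpleGraph W) [DecidableRel G.Adj] (T : SimpleGraph V) [DecidableRel T.Adj]

/-- The restriction of `T` to a finset of vertices, as a graph on the same vertex type. -/
def SG (S : Finset V) : SimpleGraph V where
  Adj a b := T.Adj a b ∧ a ∈ S ∧ b ∈ S
  symm := ⟨by rintro a b ⟨h, ha, hb⟩; exact ⟨h.symm, hb, ha⟩⟩
  loopless := ⟨fun a h => T.loopless.irrefl a h.1⟩

instance (S : Finset V) : DecidableRel (SG T S).Adj :=
  fun _ _ => inferInstanceAs (Decidable (_ ∧ _ ∧ _))

@[simp] lemma SG_adj (S : Finset V) (a b : V) :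
    (SG T S).Adj a b ↔ T.Adj a b ∧ a ∈ S ∧ b ∈ S := Iff.rfl

/-- Weighted count of partial homomorphisms defined on `S`, rooted at `r` with image `i`;
functions are pinned to `c₀` outside `S`. -/
def hS (c₀ : W) (S : Finset V) (r : V) (w : V → W → ℝ) (i : W) : ℝ :=
  ∑ φ : V → W, if ((∀ a ∉ S, φ a = c₀) ∧
      (∀ a b, a ∈ S → b ∈ S → T.Adj a b → G.Adj (φ a) (φ b)) ∧ φ r = i) then
      ∏ a ∈ S, w a (φ a) else 0

lemma hS_singleton (c₀ : W) (r : V) (w : V → W → ℝ) (i : W) :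
    hS G T c₀ {r} r w i = w r i := by
  classical
  unfold hS
  rw [Finset.sum_eq_single_of_mem (fun a => if a = r then i else c₀) (Finset.mem_univ _)]
  · rw [if_pos, Finset.prod_singleton]
    · simp
    refine ⟨?_, ?_, ?_⟩
    · intro a ha
      rw [Finset.mem_singleton] at ha
      simp [ha]
    · intro a b ha hb hadj
      rw [Finset.mem_singleton] at ha hb
      subst ha; subst hb
      exact absurd hadj (T.loopless.irrefl _)
    · simp
  · intro φ _ hne
    rw [if_neg]
    rintro ⟨h1, h2, h3⟩
    apply hne
    funext a
    by_cases hr : a = r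
    · subst hr; simp [h3]
    · simp [hr, h1 a (by simp [hr])]

lemma sum_split (v : V) (c₀ : W) (F Gf : (V → W) → ℝ)
    (h0 : ∀ ψ : V → W, ψ v ≠ c₀ → Gf ψ = 0)
    (hstep : ∀ ψ : V → W, ψ v = c₀ → ∑ j, F (Function.update ψ v j) = Gf ψ) :
    ∑ φ : V → W, F φ = ∑ ψ : V → W, Gf ψ := by
  classical
  set e := Equiv.funSplitAt v W with he
  have hsymm : ∀ (j : W) (ψ' : {a : V // a ≠ v} → W) (a : V),
      e.symm (j, ψ') a = if h : a = v then j else ψ' ⟨a, h⟩ := by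
    intro j ψ' a
    simp [he, Equiv.funSplitAt, Equiv.piSplitAt]
  have hupd : ∀ (j : W) (ψ' : {a : V // a ≠ v} → W),
      e.symm (j, ψ') = Function.update (e.symm (c₀, ψ')) v j := by
    intro j ψ'
    funext a
    by_cases h : a = v
    · subst h
      rw [hsymm, Function.update_self, dif_pos rfl]
    · rw [hsymm, Function.update_of_ne h, hsymm, dif_neg h, dif_neg h]
  have hv0 : ∀ ψ' : {a : V // a ≠ v} → W, e.symm (c₀, ψ') v = c₀ := by
    intro ψ'
    rw [hsymm, dif_pos rfl]
  rw [← Equiv.sum_comp e.symm F, ← Equiv.sum_comp e.symm Gf,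
    Fintype.sum_prod_type, Fintype.sum_prod_type]
  conv_lhs => rw [Finset.sum_comm]
  conv_rhs => rw [Finset.sum_comm]
  refine Finset.sum_congr rfl fun ψ' _ => ?_
  have hrhs : ∑ j, Gf (e.symm (j, ψ')) = Gf (e.symm (c₀, ψ')) := by
    refine Finset.sum_eq_single_of_mem c₀ (Finset.mem_univ _) fun j _ hj => ?_
    apply h0
    rw [hupd j ψ', Function.update_self]
    exact hj
  rw [hrhs, ← hstep _ (hv0 ψ')]
  exact Finset.sum_congr rfl fun j _ => by rw [hupd j ψ']

lemma hS_step (c₀ : W) (S : Finset V) (r v u : V) (w : V → W → ℝ)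
    (hv : v ∈ S) (hrv : r ≠ v)
    (hu : (SG T S).neighborFinset v = {u}) (i : W) :
    hS G T c₀ S r w i =
      hS G T c₀ (S.erase v) r
        (Function.update w u (fun j => w u j * (G.adjMatrix ℝ).mulVec (w v) j)) i := by
  classical
  have hadj : (SG T S).Adj v u := by
    rw [← SimpleGraph.mem_neighborFinset, hu]
    exact Finset.mem_singleton_self u
  have hTuv : T.Adj v u := hadj.1
  have huS : u ∈ S := hadj.2.2
  have huv : u ≠ v := fun h => (SG T S).loopless.irrefl v (h ▸ hadj)
  have huS' : u ∈ S.erase v := Finset.mem_erase.mpr ⟨huv, huS⟩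
  have huniq : ∀ a, a ∈ S → T.Adj a v → a = u := by
    intro a haS hTa
    have hmem : a ∈ (SG T S).neighborFinset v := by
      rw [SimpleGraph.mem_neighborFinset]
      exact ⟨hTa.symm, hv, haS⟩
    rwa [hu, Finset.mem_singleton] at hmem
  unfold hS
  refine sum_split v c₀ _ _ ?_ ?_
  · intro ψ hψ
    rw [if_neg]
    rintro ⟨p1, -, -⟩
    exact hψ (p1 v (by simp))
  · intro ψ hψv
    by_cases hC : (∀ a ∉ S.erase v, ψ a = c₀) ∧
        (∀ a b, a ∈ S.erase v → b ∈ S.erase v → T.Adj a b → G.Adj (ψ a) (ψ b)) ∧ ψ r = i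
    · obtain ⟨h1, h2, h3⟩ := hC
      have hterm : ∀ j : W,
          (if ((∀ a ∉ S, Function.update ψ v j a = c₀) ∧
            (∀ a b, a ∈ S → b ∈ S → T.Adj a b →
              G.Adj (Function.update ψ v j a) (Function.update ψ v j b)) ∧
            Function.update ψ v j r = i) then
            ∏ a ∈ S, w a (Function.update ψ v j a) else 0)
          = (if G.Adj (ψ u) j then w v j else 0) * ∏ a ∈ S.erase v, w a (ψ a) := by
        intro j
        by_cases hAdj : G.Adj (ψ u) j
        · rw [if_pos, if_pos hAdj]
          · rw [← Finset.mul_prod_erase S _ hv, Function.update_self]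
            congr 1
            refine Finset.prod_congr rfl fun a ha => ?_
            rw [Function.update_of_ne (Finset.mem_erase.mp ha).1]
          · refine ⟨?_, ?_, ?_⟩
            · intro a ha
              rw [Function.update_of_ne (fun h : a = v => ha (by rw [h]; exact hv))]
              exact h1 a (fun h => ha (Finset.mem_of_mem_erase h))
            · intro a b haS hbS hTab
              by_cases hav : a = v
              · subst hav
                have hbu : b = u := huniq b hbS hTab.symm
                subst hbu
                rw [Function.update_self, Function.update_of_ne huv]
                exact hAdj.symm
              · by_cases hbv : b = v
                · subst hbv
                  have hau : a = u := huniq a haS hTab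
                  subst hau
                  rw [Function.update_self, Function.update_of_ne huv]
                  exact hAdj
                · rw [Function.update_of_ne hav, Function.update_of_ne hbv]
                  exact h2 a b (Finset.mem_erase.mpr ⟨hav, haS⟩)
                    (Finset.mem_erase.mpr ⟨hbv, hbS⟩) hTab
            · rw [Function.update_of_ne hrv]
              exact h3
        · rw [if_neg, if_neg hAdj, zero_mul]
          rintro ⟨-, p2, -⟩
          have hp := p2 u v huS hv hTuv.symm
          rw [Function.update_self, Function.update_of_ne huv] at hp
          exact hAdj hp
      rw [Finset.sum_congr rfl (fun j _ => hterm j), ← Finset.sum_mul]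
      have hsum : (∑ j, if G.Adj (ψ u) j then w v j else 0)
          = (G.adjMatrix ℝ).mulVec (w v) (ψ u) := by
        rw [SimpleGraph.adjMatrix_mulVec_apply, SimpleGraph.neighborFinset_eq_filter,
          Finset.sum_filter]
      rw [hsum, if_pos ⟨h1, h2, h3⟩]
      rw [← Finset.mul_prod_erase (S.erase v)
          (fun a => Function.update w u (fun j => w u j * (G.adjMatrix ℝ).mulVec (w v) j) a (ψ a))
          huS',
        ← Finset.mul_prod_erase (S.erase v) (fun a => w a (ψ a)) huS']
      have hpr : ∏ a ∈ (S.erase v).erase u,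
          Function.update w u (fun j => w u j * (G.adjMatrix ℝ).mulVec (w v) j) a (ψ a)
          = ∏ a ∈ (S.erase v).erase u, w a (ψ a) :=
        Finset.prod_congr rfl fun a ha => by
          rw [Function.update_of_ne (Finset.mem_erase.mp ha).1]
      rw [hpr]
      simp only [Function.update_self]
      ring
    · have hz : ∀ j : W,
          (if ((∀ a ∉ S, Function.update ψ v j a = c₀) ∧
            (∀ a b, a ∈ S → b ∈ S → T.Adj a b →
              G.Adj (Function.update ψ v j a) (Function.update ψ v j b)) ∧
            Function.update ψ v j r = i) then
            ∏ a ∈ S, w a (Function.update ψ v j a) else 0) = 0 := by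
        intro j
        rw [if_neg]
        rintro ⟨p1, p2, p3⟩
        apply hC
        refine ⟨?_, ?_, ?_⟩
        · intro a ha
          by_cases hav : a = v
          · subst hav
            exact hψv
          · have haS : a ∉ S := fun h => ha (Finset.mem_erase.mpr ⟨hav, h⟩)
            have hp := p1 a haS
            rwa [Function.update_of_ne hav] at hp
        · intro a b ha hb hTab
          obtain ⟨hav, haS⟩ := Finset.mem_erase.mp ha
          obtain ⟨hbv, hbS⟩ := Finset.mem_erase.mp hb
          have hp := p2 a b haS hbS hTab
          rwa [Function.update_of_ne hav, Function.update_of_ne hbv] at hp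
        · have hp := p3
          rwa [Function.update_of_ne hrv] at hp
      rw [Finset.sum_eq_zero (fun j _ => hz j), if_neg hC]

lemma exists_leaf (S : Finset V) (hn : 2 ≤ S.card)
    (hconn : ∀ a ∈ S, ∀ b ∈ S, (SG T S).Reachable a b)
    (hedge : (SG T S).edgeFinset.card + 1 = S.card)
    (r : V) (hr : r ∈ S) :
    ∃ v ∈ S, v ≠ r ∧ (SG T S).degree v = 1 := by
  classical
  have degpos : ∀ a ∈ S, 0 < (SG T S).degree a := by
    intro a ha
    obtain ⟨b, hb, hba⟩ := Finset.exists_mem_ne hn a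
    obtain ⟨p⟩ := hconn a ha b hb
    rw [SimpleGraph.degree_pos_iff_exists_adj]
    cases p with
    | nil => exact absurd rfl hba
    | cons h q => exact ⟨_, h⟩
  have degzero : ∀ a, a ∉ S → (SG T S).degree a = 0 := by
    intro a ha
    have hempty : (SG T S).neighborFinset a = ∅ := by
      ext b
      simp only [SimpleGraph.mem_neighborFinset, SG_adj, Finset.notMem_empty, iff_false]
      rintro ⟨-, h2, -⟩
      exact ha h2
    simp [SimpleGraph.degree, hempty]
  have hhs := SimpleGraph.sum_degrees_eq_twice_card_edges (SG T S)
  have hsumS : ∑ v ∈ S, (SG T S).degree v = 2 * (SG T S).edgeFinset.card := by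
    rw [← hhs]
    exact Finset.sum_subset (Finset.subset_univ S) (fun x _ hx => degzero x hx)
  by_contra hcon
  push_neg at hcon
  have h2le : ∀ v ∈ S.erase r, 2 ≤ (SG T S).degree v := by
    intro v hv
    obtain ⟨hvr, hvS⟩ := Finset.mem_erase.mp hv
    have h1 := degpos v hvS
    have h2 := hcon v hvS hvr
    omega
  have hlow : 2 * (S.erase r).card ≤ ∑ v ∈ S.erase r, (SG T S).degree v := by
    calc 2 * (S.erase r).card = ∑ _v ∈ S.erase r, 2 := by
          rw [Finset.sum_const, smul_eq_mul, mul_comm]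
    _ ≤ _ := Finset.sum_le_sum h2le
  have hsplit : (SG T S).degree r + ∑ v ∈ S.erase r, (SG T S).degree v
      = ∑ v ∈ S, (SG T S).degree v :=
    Finset.add_sum_erase S (fun v => (SG T S).degree v) hr
  have hcard : (S.erase r).card = S.card - 1 := Finset.card_erase_of_mem hr
  have hrpos := degpos r hr
  omega

lemma edge_erase (S : Finset V) (v u : V) (hv : v ∈ S)
    (hu : (SG T S).neighborFinset v = {u}) :
    (SG T (S.erase v)).edgeFinset = (SG T S).edgeFinset.erase s(v, u) := by
  classical
  ext e
  refine Sym2.ind (fun a b => ?_) e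
  simp only [SimpleGraph.mem_edgeFinset, SimpleGraph.mem_edgeSet, Finset.mem_erase, SG_adj]
  constructor
  · rintro ⟨hT, ⟨hav, haS⟩, ⟨hbv, hbS⟩⟩
    refine ⟨?_, hT, haS, hbS⟩
    intro h
    rw [Sym2.eq_iff] at h
    rcases h with ⟨h1, h2⟩ | ⟨h1, h2⟩
    · exact hav h1
    · exact hbv h2
  · rintro ⟨hne, hT, haS, hbS⟩
    refine ⟨hT, ⟨?_, haS⟩, ⟨?_, hbS⟩⟩
    · rintro rfl
      have hb : b ∈ (SG T S).neighborFinset a := by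
        rw [SimpleGraph.mem_neighborFinset]
        exact ⟨hT, haS, hbS⟩
      rw [hu, Finset.mem_singleton] at hb
      subst hb
      exact hne rfl
    · rintro rfl
      have hb : a ∈ (SG T S).neighborFinset b := by
        rw [SimpleGraph.mem_neighborFinset]
        exact ⟨hT.symm, hbS, haS⟩
      rw [hu, Finset.mem_singleton] at hb
      subst hb
      exact hne Sym2.eq_swap

lemma reach_erase (S : Finset V) (v : V) (hv : v ∈ S) (hdeg : (SG T S).degree v = 1)
    (hconn : ∀ a ∈ S, ∀ b ∈ S, (SG T S).Reachable a b)
    (a b : V) (ha : a ∈ S.erase v) (hb : b ∈ S.erase v) :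
    (SG T (S.erase v)).Reachable a b := by
  classical
  obtain ⟨hav, haS⟩ := Finset.mem_erase.mp ha
  obtain ⟨hbv, hbS⟩ := Finset.mem_erase.mp hb
  obtain ⟨p₀⟩ := hconn a haS b hbS
  set p := p₀.bypass with hp_def
  have hp : p.IsPath := p₀.bypass_isPath
  have hvp : v ∉ p.support := by
    intro hvs
    have hva : v ≠ a := fun h => hav h.symm
    have hvb : v ≠ b := fun h => hbv h.symm
    have hspec := p.take_spec hvs
    set q := p.takeUntil v hvs with hq_def
    set q' := p.dropUntil v hvs with hq'_def
    have hnd : (q.support ++ q'.support.tail).Nodup := by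
      have h0 := hp.support_nodup
      rw [← hspec, SimpleGraph.Walk.support_append] at h0
      exact h0
    obtain ⟨x, hxadj, hxq⟩ : ∃ x, (SG T S).Adj v x ∧ x ∈ q.support := by
      obtain ⟨c, hadj, q₂, hq2⟩ := SimpleGraph.Walk.exists_eq_cons_of_ne hva q.reverse
      refine ⟨c, hadj, ?_⟩
      have hmem : c ∈ q.reverse.support := by
        rw [hq2, SimpleGraph.Walk.support_cons]
        exact List.mem_cons_of_mem _ q₂.start_mem_support
      rw [SimpleGraph.Walk.support_reverse, List.mem_reverse] at hmem
      exact hmem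
    obtain ⟨x', hx'adj, hx'q⟩ : ∃ x', (SG T S).Adj v x' ∧ x' ∈ q'.support.tail := by
      obtain ⟨c, hadj, q₂, hq2⟩ := SimpleGraph.Walk.exists_eq_cons_of_ne hvb q'
      refine ⟨c, hadj, ?_⟩
      rw [hq2, SimpleGraph.Walk.support_cons]
      exact q₂.start_mem_support
    have hxx' : x ≠ x' := by
      intro h
      exact List.disjoint_of_nodup_append hnd hxq (h ▸ hx'q)
    have h2 : ({x, x'} : Finset V) ⊆ (SG T S).neighborFinset v := by
      intro z hz
      rcases Finset.mem_insert.mp hz with rfl | hz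
      · rw [SimpleGraph.mem_neighborFinset]; exact hxadj
      · rw [Finset.mem_singleton] at hz
        subst hz
        rw [SimpleGraph.mem_neighborFinset]; exact hx'adj
    have hc2 := Finset.card_le_card h2
    rw [Finset.card_insert_of_notMem (by simp [hxx']), Finset.card_singleton] at hc2
    have hdeg' : ((SG T S).neighborFinset v).card = 1 := hdeg
    omega
  have hedges : ∀ e ∈ p.edges, e ∈ (SG T (S.erase v)).edgeSet := by
    intro e
    refine Sym2.ind (fun c d he => ?_) e
    have hcd := p.edges_subset_edgeSet he
    rw [SimpleGraph.mem_edgeSet] at hcd ⊢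
    obtain ⟨hT, hcS, hdS⟩ := hcd
    have hc := p.fst_mem_support_of_mem_edges he
    have hd := p.snd_mem_support_of_mem_edges he
    exact ⟨hT, Finset.mem_erase.mpr ⟨fun h => hvp (h ▸ hc), hcS⟩,
      Finset.mem_erase.mpr ⟨fun h => hvp (h ▸ hd), hdS⟩⟩
  exact (p.transfer _ hedges).reachable

variable (lam : ℝ) (y : W → ℝ)

/-- The main induction. -/
lemma main_induction (c₀ : W) (hlam : 0 < lam) (hy : ∀ i, 0 < y i)
    (hunit : ∑ i, (y i) ^ 2 = 1)
    (heig : (G.adjMatrix ℝ).mulVec y = lam • y)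
    (hnb : ∀ j : W, (G.neighborFinset j).Nonempty) :
    ∀ n : ℕ, ∀ S : Finset V, S.card = n →
    (∀ a ∈ S, ∀ b ∈ S, (SG T S).Reachable a b) →
    ((SG T S).edgeFinset.card + 1 = n) →
    ∀ r ∈ S, ∀ w : V → W → ℝ, (∀ a j, 0 < w a j) →
    (∀ i, 0 < hS G T c₀ S r w i) ∧
    ((n : ℝ) - 1) * Real.log lam + ∑ a ∈ S, ∑ j, (y j) ^ 2 * Real.log (w a j)
      ≤ ∑ i, (y i) ^ 2 * Real.log (hS G T c₀ S r w i) := by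
  classical
  intro n
  induction n using Nat.strong_induction_on with
  | _ n IH =>
    intro S hcard hconn hedge r hr w hw
    have hn1 : 1 ≤ n := by omega
    rcases eq_or_lt_of_le hn1 with hn | hn
    · -- base case : n = 1
      have hS1 : S = {r} := by
        obtain ⟨a, ha⟩ := Finset.card_eq_one.mp (by rw [hcard, ← hn])
        rw [ha] at hr ⊢
        rw [Finset.mem_singleton] at hr
        rw [hr]
      subst hS1
      constructor
      · intro i
        rw [hS_singleton]
        exact hw r i
      · rw [← hn]
        push_cast
        rw [Finset.sum_singleton]
        have heq : ∀ i : W, y i ^ 2 * Real.log (hS G T c₀ {r} r w i)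
            = y i ^ 2 * Real.log (w r i) := fun i => by rw [hS_singleton]
        rw [Finset.sum_congr rfl fun i _ => heq i]
        simp
    · -- inductive step : n ≥ 2
      have hn2 : 2 ≤ S.card := by omega
      obtain ⟨v, hvS, hvr, hdeg⟩ := exists_leaf T S hn2 hconn (by rw [hedge, hcard]) r hr
      have hdeg' : ((SG T S).neighborFinset v).card = 1 := hdeg
      obtain ⟨u, hu⟩ := Finset.card_eq_one.mp hdeg'
      have hadj : (SG T S).Adj v u := by
        rw [← SimpleGraph.mem_neighborFinset, hu]
        exact Finset.mem_singleton_self u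
      have huS : u ∈ S := hadj.2.2
      have huv : u ≠ v := fun h => (SG T S).loopless.irrefl v (h ▸ hadj)
      have huS' : u ∈ S.erase v := Finset.mem_erase.mpr ⟨huv, huS⟩
      set Av := (G.adjMatrix ℝ).mulVec (w v) with hAv
      set w' := Function.update w u (fun j => w u j * Av j) with hw'def
      have hAvpos : ∀ j, 0 < Av j := mulVec_pos G hnb (w v) (fun j => hw v j)
      have hw' : ∀ a j, 0 < w' a j := by
        intro a j
        by_cases hau : a = u
        · rw [hw'def, hau]
          simp only [Function.update_self]
          exact mul_pos (hw u j) (hAvpos j)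
        · rw [hw'def, Function.update_of_ne hau]
          exact hw a j
      have hcard' : (S.erase v).card = n - 1 := by
        rw [Finset.card_erase_of_mem hvS, hcard]
      have hmemE : s(v, u) ∈ (SG T S).edgeFinset := by
        rw [SimpleGraph.mem_edgeFinset, SimpleGraph.mem_edgeSet]
        exact hadj
      have hedge' : (SG T (S.erase v)).edgeFinset.card + 1 = n - 1 := by
        rw [edge_erase T S v u hvS hu, Finset.card_erase_of_mem hmemE]
        omega
      have hconn' : ∀ a ∈ S.erase v, ∀ b ∈ S.erase v, (SG T (S.erase v)).Reachable a b :=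
        fun a ha b hb => reach_erase T S v hvS hdeg hconn a b ha hb
      have hr' : r ∈ S.erase v := Finset.mem_erase.mpr ⟨hvr.symm, hr⟩
      obtain ⟨IH1, IH2⟩ := IH (n - 1) (by omega) (S.erase v) hcard' hconn' hedge' r hr' w' hw'
      have hstep : ∀ i, hS G T c₀ S r w i = hS G T c₀ (S.erase v) r w' i := by
        intro i
        rw [hw'def, hAv]
        exact hS_step G T c₀ S r v u w hvS (fun h => hvr (h.symm)) hu i
      constructor
      · intro i
        rw [hstep i]
        exact IH1 i
      · -- inequality
        have hlog' : ∑ a ∈ S.erase v, ∑ j, y j ^ 2 * Real.log (w' a j)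
            = (∑ a ∈ S.erase v, ∑ j, y j ^ 2 * Real.log (w a j))
              + ∑ j, y j ^ 2 * Real.log (Av j) := by
          have hfu : (∑ j, y j ^ 2 * Real.log (w' u j))
              = (∑ j, y j ^ 2 * Real.log (w u j)) + ∑ j, y j ^ 2 * Real.log (Av j) := by
            rw [← Finset.sum_add_distrib]
            refine Finset.sum_congr rfl fun j _ => ?_
            rw [hw'def]
            simp only [Function.update_self]
            rw [Real.log_mul (hw u j).ne' (hAvpos j).ne']
            ring
          rw [← Finset.add_sum_erase (S.erase v)
              (fun a => ∑ j, y j ^ 2 * Real.log (w' a j)) huS',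
            ← Finset.add_sum_erase (S.erase v)
              (fun a => ∑ j, y j ^ 2 * Real.log (w a j)) huS']
          have hrest : ∑ a ∈ (S.erase v).erase u, ∑ j, y j ^ 2 * Real.log (w' a j)
              = ∑ a ∈ (S.erase v).erase u, ∑ j, y j ^ 2 * Real.log (w a j) := by
            refine Finset.sum_congr rfl fun a ha => ?_
            refine Finset.sum_congr rfl fun j _ => ?_
            rw [hw'def, Function.update_of_ne (Finset.mem_erase.mp ha).1]
          rw [hrest, hfu]
          ring
        have hsplitS : ∑ a ∈ S, ∑ j, y j ^ 2 * Real.log (w a j)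
            = (∑ j, y j ^ 2 * Real.log (w v j))
              + ∑ a ∈ S.erase v, ∑ j, y j ^ 2 * Real.log (w a j) :=
          (Finset.add_sum_erase S (fun a => ∑ j, y j ^ 2 * Real.log (w a j)) hvS).symm
        have hEL := edge_lemma G lam y hlam hy hunit heig hnb (w v) (fun j => hw v j)
        have hcast : ((n - 1 : ℕ) : ℝ) = (n : ℝ) - 1 := by
          push_cast [Nat.cast_sub hn1]
          ring
        have hfin : ∑ i, y i ^ 2 * Real.log (hS G T c₀ S r w i)
            = ∑ i, y i ^ 2 * Real.log (hS G T c₀ (S.erase v) r w' i) := by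
          refine Finset.sum_congr rfl fun i _ => ?_
          rw [hstep i]
        rw [hfin, hsplitS]
        rw [hcast, hlog'] at IH2
        linarith

lemma homCount_eq (c₀ : W) (r : V) :
    (homCount T G : ℝ) = ∑ i, hS G T c₀ (univ : Finset V) r (fun _ _ => 1) i := by
  classical
  have e : (T →g G) ≃ {φ : V → W // ∀ a b, T.Adj a b → G.Adj (φ a) (φ b)} :=
    { toFun := fun f => ⟨f, fun a b h => f.map_rel h⟩
      invFun := fun p => ⟨p.1, fun {a b} h => p.2 a b h⟩
      left_inv := fun f => rfl
      right_inv := fun p => rfl }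
  have h1 : homCount T G
      = (Finset.univ.filter (fun φ : V → W => ∀ a b, T.Adj a b → G.Adj (φ a) (φ b))).card := by
    rw [homCount, Nat.card_congr e, Nat.card_eq_fintype_card, Fintype.card_subtype]
  have inner : ∀ φ : V → W,
      (∑ i, if ((∀ a ∉ (univ : Finset V), φ a = c₀) ∧
        (∀ a b, a ∈ (univ : Finset V) → b ∈ (univ : Finset V) → T.Adj a b → G.Adj (φ a) (φ b)) ∧
        φ r = i) then ∏ _a ∈ (univ : Finset V), (1:ℝ) else 0)
      = if (∀ a b, T.Adj a b → G.Adj (φ a) (φ b)) then 1 else 0 := by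
    intro φ
    by_cases hφ : ∀ a b, T.Adj a b → G.Adj (φ a) (φ b)
    · rw [if_pos hφ, Finset.sum_eq_single_of_mem (φ r) (Finset.mem_univ _)]
      · rw [if_pos ⟨fun a ha => absurd (Finset.mem_univ a) ha,
          fun a b _ _ h => hφ a b h, rfl⟩, Finset.prod_const_one]
      · intro i _ hir
        rw [if_neg]
        rintro ⟨-, -, h3⟩
        exact hir h3.symm
    · rw [if_neg hφ]
      refine Finset.sum_eq_zero fun i _ => ?_
      rw [if_neg]
      rintro ⟨-, h2, -⟩
      exact hφ (fun a b h => h2 a b (Finset.mem_univ a) (Finset.mem_univ b) h)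
  unfold hS
  conv_rhs => rw [Finset.sum_comm]
  simp only [inner]
  rw [Finset.sum_boole, h1]

end Comb

end Stmt8Aux

/-- Entropy lower bound via the spectral entropy: if `λ` is the largest eigenvalue of the
adjacency matrix of the connected graph `G`, with positive unit eigenvector `y`, and
`q i = (y i)²`, then `hom(T_m, G) ≥ exp(H_λ(G)) · λ^(m-1)` for every tree `T_m`. -/
theorem stmt_8 {V W : Type*} [Fintype V] [Fintype W]
    (G : SimpleGraph W) [DecidableRel G.Adj] (hG : G.Connected)
    (lam : ℝ) (y : W → ℝ) (hy : ∀ i, 0 < y i) (hunit : ∑ i, (y i) ^ 2 = 1)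
    (heig : (G.adjMatrix ℝ).mulVec y = lam • y)
    (hmax : ∀ (ν : ℝ) (z : W → ℝ), z ≠ 0 → (G.adjMatrix ℝ).mulVec z = ν • z → ν ≤ lam)
    (T : SimpleGraph V) [Fintype V] (hT : T.IsTree) :
    (homCount T G : ℝ) ≥
      Real.exp (∑ i, (y i) ^ 2 * Real.log (1 / (y i) ^ 2)) * lam ^ (Fintype.card V - 1) := by
  classical
  have hVne : Nonempty V := hT.isConnected.nonempty
  have hWne : Nonempty W := hG.nonempty
  have hm1 : 1 ≤ Fintype.card V := Fintype.card_pos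
  by_cases hE : ∃ a b : W, G.Adj a b
  · -- the graph G has an edge, so lam > 0
    obtain ⟨a0, b0, hab⟩ := hE
    have hlam : 0 < lam := by
      have h1 := congrFun heig a0
      rw [SimpleGraph.adjMatrix_mulVec_apply] at h1
      simp only [Pi.smul_apply, smul_eq_mul] at h1
      have hsumge : y b0 ≤ ∑ u ∈ G.neighborFinset a0, y u :=
        Finset.single_le_sum (fun i _ => (hy i).le)
          (by rwa [SimpleGraph.mem_neighborFinset])
      nlinarith [hy a0, hy b0]
    have hnb : ∀ j : W, (G.neighborFinset j).Nonempty :=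
      fun j => Stmt8Aux.neighbor_nonempty G lam y hlam hy heig j
    obtain ⟨r⟩ := hVne
    obtain ⟨c₀⟩ := hWne
    -- connectivity and edge count for `SG T univ`
    have hle : T ≤ Stmt8Aux.SG T (Finset.univ : Finset V) :=
      fun {a b} h => ⟨h, Finset.mem_univ _, Finset.mem_univ _⟩
    have hconn : ∀ a ∈ (Finset.univ : Finset V), ∀ b ∈ (Finset.univ : Finset V),
        (Stmt8Aux.SG T Finset.univ).Reachable a b :=
      fun a _ b _ => (hT.isConnected.preconnected a b).mono hle
    have hedgeeq : (Stmt8Aux.SG T (Finset.univ : Finset V)).edgeFinset = T.edgeFinset := by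
      ext e
      refine Sym2.ind (fun a b => ?_) e
      simp [SimpleGraph.mem_edgeFinset, SimpleGraph.mem_edgeSet, Stmt8Aux.SG_adj]
    have hedgecount : (Stmt8Aux.SG T (Finset.univ : Finset V)).edgeFinset.card + 1
        = Fintype.card V := by
      rw [hedgeeq]
      exact hT.card_edgeFinset
    obtain ⟨hpos, hineq⟩ := Stmt8Aux.main_induction G T lam y c₀ hlam hy hunit heig hnb
      (Fintype.card V) Finset.univ (Finset.card_univ) hconn hedgecount r (Finset.mem_univ r)
      (fun _ _ => 1) (fun _ _ => one_pos)
    have hcount := Stmt8Aux.homCount_eq G T c₀ r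
    set h := fun i => Stmt8Aux.hS G T c₀ (Finset.univ : Finset V) r (fun _ _ => (1:ℝ)) i with hh
    have hineq' : ((Fintype.card V : ℝ) - 1) * Real.log lam
        ≤ ∑ i, (y i) ^ 2 * Real.log (h i) := by
      have hz : ∑ a ∈ (Finset.univ : Finset V), ∑ j, (y j) ^ 2 * Real.log ((1:ℝ)) = 0 := by
        simp
      rw [hz] at hineq
      simpa using hineq
    have hqpos : ∀ i : W, (0:ℝ) < y i ^ 2 := fun i => pow_pos (hy i) 2
    have hjen := Stmt8Aux.jensen_log Finset.univ (fun i => y i ^ 2) (fun i => h i / y i ^ 2)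
      (fun i _ => (hqpos i).le) (fun i _ _ => div_pos (hpos i) (hqpos i)) hunit
    have hsimpl : ∑ i, y i ^ 2 * (h i / y i ^ 2) = ∑ i, h i :=
      Finset.sum_congr rfl fun i _ => by
        rw [mul_comm, div_mul_cancel₀ _ (hqpos i).ne']
    have hlogdiv : ∑ i, y i ^ 2 * Real.log (h i / y i ^ 2)
        = (∑ i, y i ^ 2 * Real.log (h i)) + ∑ i, y i ^ 2 * Real.log (1 / y i ^ 2) := by
      rw [← Finset.sum_add_distrib]
      refine Finset.sum_congr rfl fun i _ => ?_
      rw [Real.log_div (hpos i).ne' (hqpos i).ne', Real.log_div one_ne_zero (hqpos i).ne',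
        Real.log_one]
      ring
    rw [hsimpl, hlogdiv] at hjen
    haveI : Nonempty W := ⟨c₀⟩
    have hhsum : 0 < ∑ i, h i := Finset.sum_pos (fun i _ => hpos i) Finset.univ_nonempty
    rw [ge_iff_le, hcount]
    calc Real.exp (∑ i, (y i) ^ 2 * Real.log (1 / (y i) ^ 2)) * lam ^ (Fintype.card V - 1)
        = Real.exp ((∑ i, (y i) ^ 2 * Real.log (1 / (y i) ^ 2))
            + ((Fintype.card V - 1 : ℕ) : ℝ) * Real.log lam) := by
          rw [Real.exp_add, Real.exp_nat_mul, Real.exp_log hlam]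
      _ ≤ Real.exp (Real.log (∑ i, h i)) := by
          apply Real.exp_le_exp.mpr
          have hcast : ((Fintype.card V - 1 : ℕ) : ℝ) = (Fintype.card V : ℝ) - 1 := by
            push_cast [Nat.cast_sub hm1]
            ring
          rw [hcast]
          linarith
      _ = ∑ i, h i := Real.exp_log hhsum
  · -- G has no edge: then lam = 0 and W is a single vertex
    push_neg at hE
    obtain ⟨j0⟩ := hWne
    have hlam0 : lam = 0 := by
      have h1 := congrFun heig j0
      rw [SimpleGraph.adjMatrix_mulVec_apply] at h1
      have hempty : G.neighborFinset j0 = ∅ := by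
        ext b
        simp only [SimpleGraph.mem_neighborFinset, Finset.notMem_empty, iff_false]
        exact hE j0 b
      rw [hempty, Finset.sum_empty] at h1
      simp only [Pi.smul_apply, smul_eq_mul] at h1
      exact ((mul_eq_zero.mp h1.symm).resolve_right (hy j0).ne')
    by_cases hm : Fintype.card V = 1
    · -- single-vertex tree
      have hWsub : ∀ a b : W, a = b := by
        intro a b
        by_contra hab
        obtain ⟨p⟩ := hG.preconnected a b
        cases p with
        | nil => exact hab rfl
        | cons hadj q => exact hE _ _ hadj
      have huniv : (Finset.univ : Finset W) = {j0} := by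
        ext a
        simp [hWsub a j0]
      have hy1 : y j0 ^ 2 = 1 := by
        rw [huniv, Finset.sum_singleton] at hunit
        exact hunit
      have hH : (∑ i, (y i) ^ 2 * Real.log (1 / (y i) ^ 2)) = 0 := by
        rw [huniv, Finset.sum_singleton, hy1]
        norm_num
      rw [hm, hH]
      norm_num
      -- goal : 1 ≤ homCount
      have hVsub : ∀ a b : V, a = b := fun a b =>
        (Fintype.card_le_one_iff.mp (by omega)) a b
      have hhomne : Nonempty (T →g G) := by
        refine ⟨⟨fun _ => j0, ?_⟩⟩
        intro a b hadj
        exact absurd ((hVsub a b) ▸ hadj) (T.loopless.irrefl b)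
      have hfin : Finite (T →g G) :=
        Finite.of_injective (fun f => (f : V → W)) DFunLike.coe_injective
      have := Nat.card_pos (α := T →g G)
      rw [homCount]
      exact_mod_cast this
    · have hne0 : Fintype.card V - 1 ≠ 0 := by omega
      rw [hlam0, zero_pow hne0, mul_zero]
      exact Nat.cast_nonneg _
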